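/- Let (A, ⋆) be a finite-dimensional algebra with F-linear involution over an algebraically closed field F of characteristic ≠ 2, and let x be unitary (x⋆ x = 1). If x is conjugate to x⁻¹ by an invertible element of A, then x is conjugate to x⁻¹ by a unitary element of A. -/

import Mathlib

open Polynomial

lemma prodXsubC_dvd_of_roots {F : Type*} [Field F] [DecidableEq F] (s : Finset F) (p : F[X])
    (hp : ∀ a ∈ s, p.eval a = 0) : (∏ a ∈ s, (X - C a)) ∣ p := by
  induction s using Finset.induction with
  | empty => simp
  | insert a t hat ih =>
    have hc : IsCoprime (X - C a) (∏ b ∈ t, (X - C b)) :=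
      IsCoprime.prod_right fun b hb =>
        isCoprime_X_sub_C_of_isUnit_sub
          ((sub_ne_zero.mpr (fun hab => hat (by rw [hab]; exact hb))).isUnit)
    rw [Finset.prod_insert hat]
    exact hc.mul_dvd (dvd_iff_isRoot.mpr (hp a (Finset.mem_insert_self a t)))
      (ih fun b hb => hp b (Finset.mem_insert_of_mem hb))

lemma exists_sq_dvd {F : Type*} [Field F] [IsAlgClosed F] (h2 : (2 : F) ≠ 0)
    (m : F[X]) (hm : m.Monic) (h0 : m.eval 0 ≠ 0) :
    ∃ q : F[X], m ∣ q ^ 2 - X := by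
  classical
  set s : Finset F := m.roots.toFinset with hs
  set rad : F[X] := ∏ a ∈ s, (X - C a) with hrad
  have ha0 : ∀ a ∈ s, a ≠ 0 := by
    intro a ha ha'
    apply h0
    have : m.IsRoot a := isRoot_of_mem_roots (Multiset.mem_toFinset.mp ha)
    rwa [ha'] at this
  have hrad_eval : ∀ a ∈ s, rad.eval a = 0 := by
    intro a ha
    rw [hrad, eval_prod]
    exact Finset.prod_eq_zero ha (by simp)
  have hms : m ∣ rad ^ m.natDegree := by
    have hsplit := (IsAlgClosed.splits m).eq_prod_roots_of_monic hm
    have h1 : (m.roots.map fun a => X - C a).prod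
        = ∏ a ∈ s, (X - C a) ^ m.roots.count a := Finset.prod_multiset_map_count _ _
    have hdvd2 : (∏ a ∈ s, (X - C a) ^ m.roots.count a) ∣ rad ^ m.natDegree := by
      rw [hrad, ← Finset.prod_pow]
      exact Finset.prod_dvd_prod_of_dvd _ _ fun a ha => pow_dvd_pow _
        (le_trans (Multiset.count_le_card _ _) (card_roots' m))
    exact dvd_trans (dvd_of_eq (hsplit.trans h1)) hdvd2
  have key : ∀ n : ℕ, ∃ q : F[X], rad ^ (2 ^ n) ∣ q ^ 2 - X := by
    intro n
    induction n with
    | zero =>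
      have sqrt : ∀ a : F, ∃ c : F, c ^ 2 = a := fun a =>
        IsAlgClosed.exists_pow_nat_eq a (by norm_num)
      choose c hc using sqrt
      refine ⟨Lagrange.interpolate s id c, ?_⟩
      simp only [pow_zero, pow_one]
      apply prodXsubC_dvd_of_roots
      intro a ha
      rw [eval_sub, eval_pow, eval_X,
        show eval a ((Lagrange.interpolate s id) c) = c a from
          Lagrange.eval_interpolate_at_node c (Set.injOn_id _) ha]
      simp [hc a]
    | succ n ih =>
      obtain ⟨q, hq⟩ := ih
      have hqa : ∀ a ∈ s, q.eval a ≠ 0 := by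
        intro a ha hqa0
        have h1 := eval_dvd (x := a) hq
        rw [eval_pow, hrad_eval a ha, zero_pow (pow_ne_zero n two_ne_zero), zero_dvd_iff,
          eval_sub, eval_pow, eval_X, hqa0] at h1
        apply ha0 a ha
        simpa using h1.symm
      have hcop : IsCoprime (2 * q) (rad ^ 2 ^ (n + 1)) := by
        have hc2 : IsCoprime (2 : F[X]) rad := by
          refine ⟨C (2⁻¹ : F), 0, ?_⟩
          have h21 : (C (2⁻¹ : F)) * 2 = 1 := by
            rw [← map_ofNat C 2, ← C_mul, inv_mul_cancel₀ h2, C_1]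
          simp [h21]
        have hcq : IsCoprime q rad :=
          IsCoprime.prod_right fun a ha =>
            ((irreducible_X_sub_C a).coprime_iff_not_dvd.mpr
              (fun hd => hqa a ha (dvd_iff_isRoot.mp hd))).symm
        exact (hc2.mul_left hcq).pow_right
      obtain ⟨u, v, huv⟩ := hcop
      refine ⟨q - (q ^ 2 - X) * u, ?_⟩
      have hid : (q - (q ^ 2 - X) * u) ^ 2 - X
          = (q ^ 2 - X) * (1 - 2 * q * u) + (q ^ 2 - X) ^ 2 * u ^ 2 := by ring
      have h1u : 1 - 2 * q * u = rad ^ 2 ^ (n + 1) * v := by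
        rw [← huv]; ring
      rw [hid, h1u]
      refine dvd_add ⟨(q ^ 2 - X) * v, by ring⟩ ?_
      have hsq : rad ^ 2 ^ (n + 1) ∣ (q ^ 2 - X) ^ 2 := by
        have h3 := pow_dvd_pow_of_dvd hq 2
        rwa [← pow_mul, ← pow_succ] at h3
      exact hsq.mul_right _
  obtain ⟨n, hn⟩ : ∃ n : ℕ, m.natDegree ≤ 2 ^ n := ⟨m.natDegree, (Nat.lt_two_pow_self).le⟩
  obtain ⟨q, hq⟩ := key n
  exact ⟨q, (hms.trans (pow_dvd_pow rad hn)).trans hq⟩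

theorem unitary_conj_of_conj {F : Type*} [Field F] [IsAlgClosed F] (h2 : (2 : F) ≠ 0)
    {A : Type*} [Ring A] [Algebra F A] [FiniteDimensional F A]
    (s : A →ₗ[F] A) (hmul : ∀ a b : A, s (a * b) = s b * s a) (hinv : ∀ a : A, s (s a) = a)
    (x : Aˣ) (hx : s (x : A) * (x : A) = 1)
    (h : ∃ z : Aˣ, (z : A) * (x : A) * (↑z⁻¹ : A) = (↑x⁻¹ : A)) :
    ∃ z : Aˣ, s (z : A) * (z : A) = 1 ∧ (z : A) * (x : A) * (↑z⁻¹ : A) = (↑x⁻¹ : A) := by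
  classical
  obtain ⟨z, hz⟩ := h
  -- s 1 = 1
  have s1 : s (1 : A) = 1 := by
    have hsurj : Function.Surjective s := fun b => ⟨s b, hinv b⟩
    have hb : ∀ b : A, s 1 * b = b := by
      intro b
      obtain ⟨a, rfl⟩ := hsurj b
      calc s 1 * s a = s (a * 1) := (hmul a 1).symm
        _ = s a := by rw [mul_one]
    simpa using hb 1
  -- s x = x⁻¹ and s x⁻¹ = x
  have sx : s (x : A) = ((x⁻¹ : Aˣ) : A) := by
    calc s (x : A) = (s (x : A) * (x : A)) * ((x⁻¹ : Aˣ) : A) := by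
          rw [mul_assoc, Units.mul_inv, mul_one]
      _ = ((x⁻¹ : Aˣ) : A) := by rw [hx, one_mul]
  have sxinv : s ((x⁻¹ : Aˣ) : A) = (x : A) := by
    have h1 : s ((x⁻¹ : Aˣ) : A) * ((x⁻¹ : Aˣ) : A) = 1 := by
      have := hmul (x : A) ((x⁻¹ : Aˣ) : A)
      rw [Units.mul_inv, s1, sx] at this
      exact this.symm
    calc s ((x⁻¹ : Aˣ) : A) = s ((x⁻¹ : Aˣ) : A) * ((x⁻¹ : Aˣ) : A) * (x : A) := by
          rw [mul_assoc, Units.inv_mul, mul_one]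
      _ = (x : A) := by rw [h1, one_mul]
  -- z x = x⁻¹ z
  have hzx : (z : A) * (x : A) = ((x⁻¹ : Aˣ) : A) * (z : A) := by
    have := congrArg (fun a => a * (z : A)) hz
    simpa [mul_assoc, Units.inv_mul_cancel_right, Units.mul_inv_cancel_right,
      Units.inv_mul, Units.mul_inv] using this
  -- x⁻¹ * s z = s z * x
  have hkey : ((x⁻¹ : Aˣ) : A) * s (z : A) = s (z : A) * (x : A) := by
    have := congrArg s hzx
    rw [hmul, hmul, sx, sxinv] at this
    exact this
  -- s z * x⁻¹ = x * s z
  have hkey' : s (z : A) * ((x⁻¹ : Aˣ) : A) = (x : A) * s (z : A) := by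
    have := congrArg (fun a => (x : A) * a * ((x⁻¹ : Aˣ) : A)) hkey
    simpa [mul_assoc, Units.mul_inv_cancel_left, Units.mul_inv, mul_one] using this
  -- the unit s z
  have szval : s ((z : A)) * s ((z⁻¹ : Aˣ) : A) = 1 := by
    rw [← hmul, Units.inv_mul, s1]
  have szval' : s ((z⁻¹ : Aˣ) : A) * s ((z : A)) = 1 := by
    rw [← hmul, Units.mul_inv, s1]
  set w : A := s (z : A) * (z : A) with hw
  let szu : Aˣ := ⟨s (z : A), s ((z⁻¹ : Aˣ) : A), szval, szval'⟩
  let wu : Aˣ := szu * z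
  have hwu : (wu : A) = w := rfl
  have hcommxw : w * (x : A) = (x : A) * w := by
    calc w * (x : A) = s (z : A) * ((z : A) * (x : A)) := by rw [hw, mul_assoc]
      _ = s (z : A) * (((x⁻¹ : Aˣ) : A) * (z : A)) := by rw [hzx]
      _ = (s (z : A) * ((x⁻¹ : Aˣ) : A)) * (z : A) := by rw [mul_assoc]
      _ = ((x : A) * s (z : A)) * (z : A) := by rw [hkey']
      _ = (x : A) * w := by rw [hw, mul_assoc]
  have hsw : s w = w := by rw [hw, hmul, hinv]
  have hint : IsIntegral F w := IsIntegral.of_finite F w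
  have hm : (minpoly F w).Monic := minpoly.monic hint
  have h0 : (minpoly F w).eval 0 ≠ 0 := by
    intro hev
    have hXdvd : X ∣ minpoly F w := by
      have hr : (X - C (0 : F)) ∣ minpoly F w := dvd_iff_isRoot.mpr hev
      rwa [C_0, sub_zero] at hr
    obtain ⟨g, hg⟩ := hXdvd
    have hgne : g ≠ 0 := by
      intro h'; rw [h', mul_zero] at hg; exact minpoly.ne_zero hint hg
    have haev : aeval w (minpoly F w) = 0 := minpoly.aeval F w
    rw [hg, map_mul, aeval_X] at haev
    have hg0 : aeval w g = 0 := (Units.mul_right_eq_zero wu).mp haev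
    have hdeg := minpoly.degree_le_of_ne_zero F w hgne hg0
    have hlt := degree_lt_degree_mul_X hgne
    rw [mul_comm, ← hg] at hlt
    exact absurd (hdeg.trans_lt hlt) (lt_irrefl _)
  obtain ⟨q, hqd⟩ := exists_sq_dvd h2 (minpoly F w) hm h0
  set k : A := aeval w q with hk_def
  have hk2 : k * k = w := by
    obtain ⟨g, hg⟩ := hqd
    have hh := congrArg (aeval w) hg
    rw [map_sub, map_pow, aeval_X, map_mul, minpoly.aeval, zero_mul] at hh
    have h' := sub_eq_zero.mp hh
    rw [pow_two] at h'
    exact h'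
  have hxk : ∀ p : Polynomial F, (x : A) * aeval w p = aeval w p * (x : A) := by
    intro p
    induction p using Polynomial.induction_on' with
    | add p q hp hq => rw [map_add, mul_add, add_mul, hp, hq]
    | monomial n c =>
      rw [aeval_monomial]
      have hxn : (x : A) * w ^ n = w ^ n * (x : A) := by
        induction n with
        | zero => simp
        | succ n ihn => rw [pow_succ, ← mul_assoc, ihn, mul_assoc, ← hcommxw, ← mul_assoc]
      calc (x : A) * (algebraMap F A c * w ^ n)
          = algebraMap F A c * ((x : A) * w ^ n) := by
            rw [← mul_assoc, ← Algebra.commutes, mul_assoc]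
        _ = algebraMap F A c * w ^ n * (x : A) := by rw [hxn, mul_assoc]
  have hswn : ∀ n : ℕ, s (w ^ n) = w ^ n := by
    intro n
    induction n with
    | zero => simpa using s1
    | succ n ihn => rw [pow_succ, hmul, hsw, ihn, ← pow_succ', ← pow_succ]
  have hsaeval : ∀ p : Polynomial F, s (aeval w p) = aeval w p := by
    intro p
    induction p using Polynomial.induction_on' with
    | add p q hp hq => rw [map_add, map_add, hp, hq]
    | monomial n c => rw [aeval_monomial, ← Algebra.smul_def, map_smul, hswn]
  have hsk : s k = k := hsaeval q
  have hcxk : Commute (x : A) k := hxk q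
  have hkw : Commute k (wu : A) := by
    show k * (wu : A) = (wu : A) * k
    rw [hwu, ← hk2, mul_assoc, ← mul_assoc]
  have hkinv : k * (k * ((wu⁻¹ : Aˣ) : A)) = 1 := by
    rw [← mul_assoc, hk2, ← hwu]
    exact wu.mul_inv
  have hkinv' : (k * ((wu⁻¹ : Aˣ) : A)) * k = 1 := by
    have hc2 : Commute k ((wu⁻¹ : Aˣ) : A) := hkw.units_inv_right
    rw [mul_assoc, ← hc2.eq]
    exact hkinv
  let ku : Aˣ := ⟨k, k * ((wu⁻¹ : Aˣ) : A), hkinv, hkinv'⟩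
  have hku : (ku : A) = k := rfl
  have hkuinv_l : ((ku⁻¹ : Aˣ) : A) * k = 1 := ku.inv_mul
  have hkuinv_r : k * ((ku⁻¹ : Aˣ) : A) = 1 := ku.mul_inv
  refine ⟨z * ku⁻¹, ?_, ?_⟩
  · have hsku : s ((ku⁻¹ : Aˣ) : A) = ((ku⁻¹ : Aˣ) : A) := by
      have h1 : k * s ((ku⁻¹ : Aˣ) : A) = 1 := by
        have hh := hmul ((ku⁻¹ : Aˣ) : A) k
        rw [hkuinv_l, s1, hsk] at hh
        exact hh.symm
      calc s ((ku⁻¹ : Aˣ) : A) = (((ku⁻¹ : Aˣ) : A) * k) * s ((ku⁻¹ : Aˣ) : A) := by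
            rw [hkuinv_l, one_mul]
        _ = ((ku⁻¹ : Aˣ) : A) * (k * s ((ku⁻¹ : Aˣ) : A)) := by rw [mul_assoc]
        _ = ((ku⁻¹ : Aˣ) : A) := by rw [h1, mul_one]
    show s ((z : A) * ((ku⁻¹ : Aˣ) : A)) * ((z : A) * ((ku⁻¹ : Aˣ) : A)) = 1
    rw [hmul, hsku]
    calc ((ku⁻¹ : Aˣ) : A) * s (z : A) * ((z : A) * ((ku⁻¹ : Aˣ) : A))
        = ((ku⁻¹ : Aˣ) : A) * ((s (z : A) * (z : A)) * ((ku⁻¹ : Aˣ) : A)) := by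
          simp only [mul_assoc]
      _ = ((ku⁻¹ : Aˣ) : A) * ((k * k) * ((ku⁻¹ : Aˣ) : A)) := by rw [← hw, ← hk2]
      _ = (((ku⁻¹ : Aˣ) : A) * k) * (k * ((ku⁻¹ : Aˣ) : A)) := by simp only [mul_assoc]
      _ = 1 := by rw [hkuinv_l, hkuinv_r, one_mul]
  · show ((z * ku⁻¹ : Aˣ) : A) * (x : A) * (((z * ku⁻¹)⁻¹ : Aˣ) : A) = ((x⁻¹ : Aˣ) : A)
    rw [mul_inv_rev, inv_inv, Units.val_mul, Units.val_mul]
    have hxk' : ((ku⁻¹ : Aˣ) : A) * (x : A) * (ku : A) = (x : A) := by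
      have h' := (hcxk.units_inv_right (u := ku)).eq
      rw [hku, ← h', mul_assoc, hkuinv_l, mul_one]
    calc (z : A) * ((ku⁻¹ : Aˣ) : A) * (x : A) * ((ku : A) * ((z⁻¹ : Aˣ) : A))
        = (z : A) * (((ku⁻¹ : Aˣ) : A) * (x : A) * (ku : A)) * ((z⁻¹ : Aˣ) : A) := by
          simp only [mul_assoc]
      _ = (z : A) * (x : A) * ((z⁻¹ : Aˣ) : A) := by rw [hxk']
      _ = ((x⁻¹ : Aˣ) : A) := hz
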